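/- (Monotonicity of the UCL lower bound in C for k = 1) Let ψ: ℝ → ℝ be convex and non-decreasing and for integer C ≥ 2 define B(C) := (1/C)·((C−1)·ψ(−C/(C−1)) + ψ(0)). Then B(C+1) ≤ B(C) for all C ≥ 2, i.e., B is non-increasing in C. -/

import Mathlib

/-- Monotonicity of the UCL lower bound in the number of latent classes for one
negative sample: for convex non-decreasing `ψ`,
`B(C) = (1/C)((C−1)ψ(−C/(C−1)) + ψ(0))` is non-increasing: `B(C+1) ≤ B(C)` for
all integers `C ≥ 2`. -/
theorem stmt_14 (ψ : ℝ → ℝ) (hconv : ConvexOn ℝ Set.univ ψ) (hmono : Monotone ψ)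
    (B : ℕ → ℝ)
    (hB : ∀ C : ℕ, B C =
      ((C : ℝ))⁻¹ * (((C : ℝ) - 1) * ψ (-(C : ℝ) / ((C : ℝ) - 1)) + ψ 0)) :
    ∀ C : ℕ, 2 ≤ C → B (C + 1) ≤ B C := by
  intro C hC
  have hc : (2:ℝ) ≤ (C:ℝ) := by exact_mod_cast hC
  set c : ℝ := (C:ℝ) with hcdef
  have hc0 : (0:ℝ) < c := by linarith
  have hc1 : (0:ℝ) < c - 1 := by linarith
  have ha : (0:ℝ) ≤ (c^2 - 1)/c^2 := by
    apply div_nonneg <;> nlinarith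
  have hb : (0:ℝ) ≤ 1/c^2 := by positivity
  have hab : (c^2 - 1)/c^2 + 1/c^2 = 1 := by
    field_simp
    ring
  have key := hconv.2 (Set.mem_univ (-c/(c-1))) (Set.mem_univ (0:ℝ)) ha hb hab
  have harg : ((c^2 - 1)/c^2) • (-c/(c-1)) + (1/c^2) • (0:ℝ) = -(c+1)/c := by
    simp only [smul_eq_mul, mul_zero, add_zero]
    field_simp
    ring
  rw [harg] at key
  simp only [smul_eq_mul] at key
  rw [hB (C+1), hB C]
  push_cast
  rw [← hcdef]
  have h1 : (c + 1 - 1) = c := by ring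
  rw [h1]
  have hcp : (0:ℝ) < c + 1 := by linarith
  rw [inv_mul_eq_div, inv_mul_eq_div, div_le_div_iff₀ hcp hc0]
  have key2 : c^2 * ψ (-(c+1)/c) ≤ c^2 * ((c^2-1)/c^2 * ψ (-c/(c-1)) + 1/c^2 * ψ 0) :=
    mul_le_mul_of_nonneg_left key (by positivity)
  have hcne : c ≠ 0 := ne_of_gt hc0
  have e1 : c^2 * ((c^2-1)/c^2 * ψ (-c/(c-1)) + 1/c^2 * ψ 0) = (c^2-1) * ψ (-c/(c-1)) + ψ 0 := by
    field_simp
  rw [e1] at key2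
  nlinarith [key2]
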